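/- Let α ∈ (0,2), r > 0, θ₂ > 0. Then ψ_{r,α}(θ₂) = (2/(θ₂^{1−α}·π))·∫₀^∞ ((1 − e^{−x²})/x^{1+2α})·(J₀(√2·r·x/√θ₂) − 2·J₀(r·x/√θ₂) + 1) dx is strictly positive. -/

import Mathlib

open Real MeasureTheory Set

/-- Bessel function of the first kind of order 0, via its integral representation. -/
noncomputable def J0 (x : ℝ) : ℝ := (2 / π) * ∫ t in (0:ℝ)..(π/2), Real.cos (x * Real.sin t)

lemma besselCombo_eq (y : ℝ) :
    J0 (Real.sqrt 2 * y) - 2 * J0 y + 1 =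
      (2/π) * ∫ t in (0:ℝ)..(π/2),
        (1 - Real.cos (y * Real.cos t)) * (1 - Real.cos (y * Real.sin t)) := by
  have hπ : (0:ℝ) < π := Real.pi_pos
  set s := Real.sqrt 2 * y with hs
  have h2 : Real.sqrt 2 ^ 2 = 2 := Real.sq_sqrt (by norm_num)
  have c1 : Continuous fun t : ℝ => Real.cos (y * Real.sin t) := by fun_prop
  have c2 : Continuous fun t : ℝ => Real.cos (y * Real.cos t) := by fun_prop
  have c3 : Continuous fun t : ℝ => Real.cos (s * Real.sin t) := by fun_prop
  have c4 : Continuous fun t : ℝ => Real.cos (y * (Real.cos t - Real.sin t)) := by fun_prop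
  have c5 : Continuous fun t : ℝ => Real.cos (y * (Real.cos t + Real.sin t)) := by fun_prop
  -- pointwise keys
  have key1 : ∀ t : ℝ, Real.cos (s * Real.sin (π/4 - t)) = Real.cos (y * (Real.cos t - Real.sin t)) := by
    intro t
    congr 1
    rw [Real.sin_sub, Real.sin_pi_div_four, Real.cos_pi_div_four, hs]
    linear_combination (y * (Real.cos t - Real.sin t) / 2) * h2
  have key2 : ∀ t : ℝ, Real.cos (s * Real.sin (t + π/4)) = Real.cos (y * (Real.cos t + Real.sin t)) := by
    intro t
    congr 1
    rw [Real.sin_add, Real.sin_pi_div_four, Real.cos_pi_div_four, hs]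
    linear_combination (y * (Real.cos t + Real.sin t) / 2) * h2
  -- step 1 : ∫ cos (y cos t) = ∫ cos (y sin t)
  have h1 : (∫ t in (0:ℝ)..(π/2), Real.cos (y * Real.cos t))
      = ∫ t in (0:ℝ)..(π/2), Real.cos (y * Real.sin t) := by
    have := intervalIntegral.integral_comp_sub_left (a := 0) (b := π/2)
      (fun t => Real.cos (y * Real.sin t)) (π/2)
    simpa [Real.sin_pi_div_two_sub] using this
  -- A : ∫₀^{π/2} cos (y (cos - sin)) = ∫_{-π/4}^{π/4} cos (s sin u)
  have hA1 : (∫ t in (0:ℝ)..(π/2), Real.cos (y * (Real.cos t - Real.sin t)))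
      = ∫ u in (-(π/4))..(π/4), Real.cos (s * Real.sin u) := by
    have := intervalIntegral.integral_comp_sub_left (a := 0) (b := π/2)
      (fun u => Real.cos (s * Real.sin u)) (π/4)
    simp only [key1, sub_zero] at this
    rw [show π/4 - π/2 = -(π/4) by ring] at this
    exact this
  have hA2 : (∫ u in (-(π/4):ℝ)..(0:ℝ), Real.cos (s * Real.sin u))
      = ∫ u in (0:ℝ)..(π/4), Real.cos (s * Real.sin u) := by
    have := intervalIntegral.integral_comp_neg (a := 0) (b := π/4)
      (fun u => Real.cos (s * Real.sin u))
    simp only [Real.sin_neg, mul_neg, Real.cos_neg, neg_zero] at this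
    exact this.symm
  have hAsplit : (∫ u in (-(π/4):ℝ)..(π/4), Real.cos (s * Real.sin u))
      = (∫ u in (-(π/4):ℝ)..(0:ℝ), Real.cos (s * Real.sin u))
        + ∫ u in (0:ℝ)..(π/4), Real.cos (s * Real.sin u) :=
    (intervalIntegral.integral_add_adjacent_intervals
      (c3.intervalIntegrable _ _) (c3.intervalIntegrable _ _)).symm
  have hA : (∫ t in (0:ℝ)..(π/2), Real.cos (y * (Real.cos t - Real.sin t)))
      = 2 * ∫ u in (0:ℝ)..(π/4), Real.cos (s * Real.sin u) := by
    rw [hA1, hAsplit, hA2]; ring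
  -- B : ∫₀^{π/2} cos (y (cos + sin)) = ∫_{π/4}^{π/4+π/2} cos (s sin u)
  have hB1 : (∫ t in (0:ℝ)..(π/2), Real.cos (y * (Real.cos t + Real.sin t)))
      = ∫ u in (π/4)..(π/2 + π/4), Real.cos (s * Real.sin u) := by
    have := intervalIntegral.integral_comp_add_right (a := 0) (b := π/2)
      (fun u => Real.cos (s * Real.sin u)) (π/4)
    simp only [key2, zero_add] at this
    exact this
  have hB2 : (∫ u in (π/2)..(π/2 + π/4), Real.cos (s * Real.sin u))
      = ∫ u in (π/4)..(π/2), Real.cos (s * Real.sin u) := by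
    have := intervalIntegral.integral_comp_sub_left (a := π/4) (b := π/2)
      (fun u => Real.cos (s * Real.sin u)) π
    simp only [Real.sin_pi_sub] at this
    rw [show π - π/2 = π/2 by ring, show π - π/4 = π/2 + π/4 by ring] at this
    exact this.symm
  have hBsplit : (∫ u in (π/4)..(π/2 + π/4), Real.cos (s * Real.sin u))
      = (∫ u in (π/4)..(π/2), Real.cos (s * Real.sin u))
        + ∫ u in (π/2)..(π/2 + π/4), Real.cos (s * Real.sin u) :=
    (intervalIntegral.integral_add_adjacent_intervals
      (c3.intervalIntegrable _ _) (c3.intervalIntegrable _ _)).symm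
  have hB : (∫ t in (0:ℝ)..(π/2), Real.cos (y * (Real.cos t + Real.sin t)))
      = 2 * ∫ u in (π/4)..(π/2), Real.cos (s * Real.sin u) := by
    rw [hB1, hBsplit, hB2]; ring
  have hS : (∫ u in (0:ℝ)..(π/4), Real.cos (s * Real.sin u))
        + (∫ u in (π/4)..(π/2), Real.cos (s * Real.sin u))
      = ∫ u in (0:ℝ)..(π/2), Real.cos (s * Real.sin u) :=
    intervalIntegral.integral_add_adjacent_intervals
      (c3.intervalIntegrable _ _) (c3.intervalIntegrable _ _)
  -- expand the integrand
  have expand : ∀ t : ℝ, (1 - Real.cos (y * Real.cos t)) * (1 - Real.cos (y * Real.sin t))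
      = 1 - Real.cos (y * Real.cos t) - Real.cos (y * Real.sin t)
        + (Real.cos (y * (Real.cos t - Real.sin t)) + Real.cos (y * (Real.cos t + Real.sin t))) / 2 := by
    intro t
    have keyP : Real.cos (y * Real.cos t) * Real.cos (y * Real.sin t)
        = (Real.cos (y * (Real.cos t - Real.sin t)) + Real.cos (y * (Real.cos t + Real.sin t))) / 2 := by
      rw [show y * (Real.cos t - Real.sin t) = y * Real.cos t - y * Real.sin t by ring,
        show y * (Real.cos t + Real.sin t) = y * Real.cos t + y * Real.sin t by ring,
        Real.cos_sub, Real.cos_add]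
      ring
    linear_combination keyP
  rw [intervalIntegral.integral_congr (g := fun t =>
      1 - Real.cos (y * Real.cos t) - Real.cos (y * Real.sin t)
        + (Real.cos (y * (Real.cos t - Real.sin t)) + Real.cos (y * (Real.cos t + Real.sin t))) / 2)
    (fun t _ => expand t)]
  rw [intervalIntegral.integral_add (by exact ((continuous_const.sub c2).sub c1).intervalIntegrable _ _)
      (by exact ((c4.add c5).div_const 2).intervalIntegrable _ _),
    intervalIntegral.integral_sub (by exact (continuous_const.sub c2).intervalIntegrable _ _)
      (c1.intervalIntegrable _ _),
    intervalIntegral.integral_sub (by exact continuous_const.intervalIntegrable _ _)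
      (c2.intervalIntegrable _ _),
    intervalIntegral.integral_div,
    intervalIntegral.integral_add (c4.intervalIntegrable _ _) (c5.intervalIntegrable _ _),
    h1, hA, hB]
  simp only [intervalIntegral.integral_const, smul_eq_mul, mul_one, sub_zero]
  simp only [J0]
  have hIs : (2:ℝ) * (∫ u in (0:ℝ)..(π/4), Real.cos (s * Real.sin u))
      + 2 * (∫ u in (π/4)..(π/2), Real.cos (s * Real.sin u))
      = 2 * ∫ u in (0:ℝ)..(π/2), Real.cos (s * Real.sin u) := by
    rw [← hS]; ring
  field_simp
  linear_combination (-2:ℝ) * hS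

lemma one_sub_cos_nonneg (u : ℝ) : 0 ≤ 1 - Real.cos u := by
  have := Real.cos_le_one u; linarith

lemma one_sub_cos_le (u : ℝ) : 1 - Real.cos u ≤ u ^ 2 / 2 := by
  have := Real.one_sub_sq_div_two_le_cos (x := u); linarith

lemma besselCombo_nonneg (y : ℝ) : 0 ≤ J0 (Real.sqrt 2 * y) - 2 * J0 y + 1 := by
  rw [besselCombo_eq]
  apply mul_nonneg (by positivity)
  apply intervalIntegral.integral_nonneg (by positivity)
  intro t _
  exact mul_nonneg (one_sub_cos_nonneg _) (one_sub_cos_nonneg _)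

lemma besselCombo_le_four (y : ℝ) : J0 (Real.sqrt 2 * y) - 2 * J0 y + 1 ≤ 4 := by
  have hπ := Real.pi_pos
  rw [besselCombo_eq]
  have hb : (∫ t in (0:ℝ)..(π/2),
      (1 - Real.cos (y * Real.cos t)) * (1 - Real.cos (y * Real.sin t))) ≤ π/2 * 4 := by
    have := intervalIntegral.integral_mono_on (a := 0) (b := π/2) (μ := volume) (by positivity)
      (f := fun t => (1 - Real.cos (y * Real.cos t)) * (1 - Real.cos (y * Real.sin t)))
      (g := fun _ => (4:ℝ))
      (by apply Continuous.intervalIntegrable; fun_prop)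
      (intervalIntegrable_const)
      (fun t _ => by
        have h1 := Real.cos_le_one (y * Real.cos t)
        have h2 := Real.cos_le_one (y * Real.sin t)
        have h3 := Real.neg_one_le_cos (y * Real.cos t)
        have h4 := Real.neg_one_le_cos (y * Real.sin t)
        calc (1 - Real.cos (y * Real.cos t)) * (1 - Real.cos (y * Real.sin t))
            ≤ 2 * 2 := by
              apply mul_le_mul (by linarith) (by linarith) (by linarith) (by norm_num)
          _ = 4 := by norm_num)
    simpa using this
  calc (2/π) * ∫ t in (0:ℝ)..(π/2),
        (1 - Real.cos (y * Real.cos t)) * (1 - Real.cos (y * Real.sin t))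
      ≤ (2/π) * (π/2 * 4) := by
        apply mul_le_mul_of_nonneg_left hb (by positivity)
    _ = 4 := by field_simp
  
lemma besselCombo_le_quartic (y : ℝ) : J0 (Real.sqrt 2 * y) - 2 * J0 y + 1 ≤ y ^ 4 := by
  have hπ := Real.pi_pos
  rw [besselCombo_eq]
  have hb : (∫ t in (0:ℝ)..(π/2),
      (1 - Real.cos (y * Real.cos t)) * (1 - Real.cos (y * Real.sin t))) ≤ π/2 * (y^4/4) := by
    have := intervalIntegral.integral_mono_on (a := 0) (b := π/2) (μ := volume) (by positivity)
      (f := fun t => (1 - Real.cos (y * Real.cos t)) * (1 - Real.cos (y * Real.sin t)))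
      (g := fun _ => (y^4/4 : ℝ))
      (by apply Continuous.intervalIntegrable; fun_prop)
      (intervalIntegrable_const)
      (fun t _ => by
        have h1 := one_sub_cos_le (y * Real.cos t)
        have h2 := one_sub_cos_le (y * Real.sin t)
        have h3 := one_sub_cos_nonneg (y * Real.cos t)
        have h4 := one_sub_cos_nonneg (y * Real.sin t)
        have h5 : Real.cos t ^ 2 ≤ 1 := Real.cos_sq_le_one t
        have h6 : Real.sin t ^ 2 ≤ 1 := Real.sin_sq_le_one t
        have h7 : (0:ℝ) ≤ y^2 * Real.cos t ^2 := by positivity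
        have h8 : (0:ℝ) ≤ y^2 * Real.sin t ^2 := by positivity
        calc (1 - Real.cos (y * Real.cos t)) * (1 - Real.cos (y * Real.sin t))
            ≤ ((y * Real.cos t)^2/2) * ((y * Real.sin t)^2/2) := by
              apply mul_le_mul h1 h2 h4 (by positivity)
          _ ≤ (y^2/2) * (y^2/2) := by
              apply mul_le_mul ?_ ?_ (by positivity) (by positivity)
              · nlinarith
              · nlinarith
          _ = y^4/4 := by ring)
    simpa [mul_div_assoc] using this
  calc (2/π) * ∫ t in (0:ℝ)..(π/2),
        (1 - Real.cos (y * Real.cos t)) * (1 - Real.cos (y * Real.sin t))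
      ≤ (2/π) * (π/2 * (y^4/4)) := by
        apply mul_le_mul_of_nonneg_left hb (by positivity)
    _ = y^4/4 := by field_simp
    _ ≤ y^4 := by nlinarith [sq_nonneg (y^2)]

lemma besselCombo_pos (y : ℝ) (h0 : 0 < y) (h1 : y ≤ 1) :
    0 < J0 (Real.sqrt 2 * y) - 2 * J0 y + 1 := by
  have hπ := Real.pi_pos
  rw [besselCombo_eq]
  apply mul_pos (by positivity)
  apply intervalIntegral.intervalIntegral_pos_of_pos_on
  · apply Continuous.intervalIntegrable; fun_prop
  · intro t ht
    obtain ⟨ht0, ht1⟩ := ht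
    have hct : 0 < Real.cos t := Real.cos_pos_of_mem_Ioo ⟨by linarith, ht1⟩
    have hst : 0 < Real.sin t := Real.sin_pos_of_pos_of_lt_pi ht0 (by linarith)
    have hctle : Real.cos t ≤ 1 := Real.cos_le_one t
    have hstle : Real.sin t ≤ 1 := Real.sin_le_one t
    have f1 : Real.cos (y * Real.cos t) < 1 := by
      have : 0 < y * Real.cos t := by positivity
      have hle : y * Real.cos t ≤ π := by nlinarith [Real.pi_gt_three]
      have := Real.cos_lt_cos_of_nonneg_of_le_pi (le_refl 0 |>.trans (le_refl 0)) hle this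
      simpa using this
    have f2 : Real.cos (y * Real.sin t) < 1 := by
      have : 0 < y * Real.sin t := by positivity
      have hle : y * Real.sin t ≤ π := by nlinarith [Real.pi_gt_three]
      have := Real.cos_lt_cos_of_nonneg_of_le_pi (le_refl 0) hle this
      simpa using this
    have := one_sub_cos_nonneg (y * Real.cos t)
    have := one_sub_cos_nonneg (y * Real.sin t)
    nlinarith
  · positivity

lemma continuous_J0 : Continuous J0 := by
  unfold J0
  apply Continuous.mul continuous_const
  exact intervalIntegral.continuous_parametric_intervalIntegral_of_continuous
    (by fun_prop : Continuous (Function.uncurry fun x t : ℝ => Real.cos (x * Real.sin t)))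
    continuous_const

theorem psi_pos (α r θ₂ : ℝ) (hα : α ∈ Set.Ioo (0:ℝ) 2) (hr : 0 < r) (hθ₂ : 0 < θ₂) :
    0 < (2 / (θ₂ ^ (1 - α) * π)) *
      ∫ x in Ioi (0:ℝ), ((1 - Real.exp (-x^2)) / x ^ (1 + 2*α)) *
        (J0 (Real.sqrt 2 * r * x / Real.sqrt θ₂) - 2 * J0 (r * x / Real.sqrt θ₂) + 1) := by
  obtain ⟨hα0, hα2⟩ := hα
  have hπ := Real.pi_pos
  have hsθ : (0:ℝ) < Real.sqrt θ₂ := Real.sqrt_pos.2 hθ₂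
  set c : ℝ := r / Real.sqrt θ₂ with hc
  have hcpos : 0 < c := by positivity
  have harg1 : ∀ x : ℝ, Real.sqrt 2 * r * x / Real.sqrt θ₂ = Real.sqrt 2 * (c * x) := by
    intro x; rw [hc]; field_simp
  have harg2 : ∀ x : ℝ, r * x / Real.sqrt θ₂ = c * x := by
    intro x; rw [hc]; field_simp
  simp only [harg1, harg2]
  set f : ℝ → ℝ := fun x => ((1 - Real.exp (-x^2)) / x ^ (1 + 2*α)) *
    (J0 (Real.sqrt 2 * (c * x)) - 2 * J0 (c * x) + 1) with hf
  -- basic facts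
  have hexp : ∀ x : ℝ, 0 < x → 0 < 1 - Real.exp (-x^2) := by
    intro x hx
    have : Real.exp (-x^2) < Real.exp 0 := Real.exp_lt_exp.2 (by nlinarith)
    rw [Real.exp_zero] at this; linarith
  have hexple : ∀ x : ℝ, 1 - Real.exp (-x^2) ≤ x^2 := by
    intro x; nlinarith [Real.add_one_le_exp (-x^2)]
  have hexple1 : ∀ x : ℝ, 1 - Real.exp (-x^2) ≤ 1 := by
    intro x; nlinarith [Real.exp_pos (-x^2)]
  have hfnonneg : ∀ x ∈ Ioi (0:ℝ), 0 ≤ f x := by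
    intro x hx
    have hx0 : (0:ℝ) < x := hx
    apply mul_nonneg
    · apply div_nonneg (le_of_lt (hexp x hx0)) (le_of_lt (Real.rpow_pos_of_pos hx0 _))
    · exact besselCombo_nonneg (c * x)
  -- continuity on Ioi 0
  have hcont : ContinuousOn f (Ioi 0) := by
    apply ContinuousOn.mul
    · apply ContinuousOn.div (by fun_prop)
      · intro x hx
        exact (Real.continuousAt_rpow_const x _ (Or.inl (ne_of_gt hx))).continuousWithinAt
      · intro x hx
        exact (Real.rpow_pos_of_pos hx _).ne'
    · apply Continuous.continuousOn
      have h1 : Continuous fun x : ℝ => J0 (Real.sqrt 2 * (c * x)) :=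
        continuous_J0.comp (by fun_prop)
      have h2 : Continuous fun x : ℝ => J0 (c * x) := continuous_J0.comp (by fun_prop)
      continuity
  -- integrability
  have hint : IntegrableOn f (Ioi 0) := by
    have hsplit : Ioc (0:ℝ) 1 ∪ Ioi 1 = Ioi 0 := Ioc_union_Ioi_eq_Ioi zero_le_one
    rw [← hsplit]
    apply MeasureTheory.IntegrableOn.union
    · -- on Ioc 0 1
      have hg1 : IntegrableOn (fun x : ℝ => c^4 * x ^ ((5:ℝ) - 2*α)) (Ioc 0 1) := by
        exact ((intervalIntegral.intervalIntegrable_rpow'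
          (by linarith : (-1:ℝ) < 5 - 2*α)).1).const_mul _
      apply hg1.integrable.mono'
      · exact (hcont.mono Ioc_subset_Ioi_self).aestronglyMeasurable measurableSet_Ioc
      · refine (ae_restrict_iff' measurableSet_Ioc).2 (ae_of_all _ ?_)
        intro x hx
        obtain ⟨hx0, hx1⟩ := hx
        rw [Real.norm_eq_abs, abs_of_nonneg (hfnonneg x hx0)]
        have hxp : (0:ℝ) < x ^ (1+2*α) := Real.rpow_pos_of_pos hx0 _
        have hstep : f x ≤ (x^2 / x ^ (1+2*α)) * (c*x)^4 := by
          apply mul_le_mul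
          · exact div_le_div_of_nonneg_right (hexple x) hxp.le
          · exact besselCombo_le_quartic (c * x)
          · exact besselCombo_nonneg (c * x)
          · positivity
        refine hstep.trans (le_of_eq ?_)
        rw [show ((5:ℝ) - 2*α) = 6 - (1+2*α) by ring, Real.rpow_sub hx0,
          show ((6:ℝ)) = ((6:ℕ):ℝ) by norm_num, Real.rpow_natCast]
        field_simp
    · -- on Ioi 1
      have hg2 : IntegrableOn (fun x : ℝ => 4 * x ^ (-(1 + 2*α))) (Ioi 1) := by
        exact (integrableOn_Ioi_rpow_of_lt (by linarith) one_pos).const_mul _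
      apply hg2.integrable.mono'
      · exact (hcont.mono (Ioi_subset_Ioi zero_le_one)).aestronglyMeasurable measurableSet_Ioi
      · refine (ae_restrict_iff' measurableSet_Ioi).2 (ae_of_all _ ?_)
        intro x hx
        have hx1 : (1:ℝ) < x := hx
        have hx0 : (0:ℝ) < x := lt_trans zero_lt_one hx1
        rw [Real.norm_eq_abs, abs_of_nonneg (hfnonneg x hx0)]
        have hxp : (0:ℝ) < x ^ (1+2*α) := Real.rpow_pos_of_pos hx0 _
        have hstep : f x ≤ (1 / x ^ (1+2*α)) * 4 := by
          apply mul_le_mul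
          · exact div_le_div_of_nonneg_right (hexple1 x) hxp.le
          · exact besselCombo_le_four (c * x)
          · exact besselCombo_nonneg (c * x)
          · positivity
        refine hstep.trans (le_of_eq ?_)
        rw [Real.rpow_neg (le_of_lt hx0)]
        field_simp
  -- positivity
  apply mul_pos (by positivity)
  rw [MeasureTheory.setIntegral_pos_iff_support_of_nonneg_ae
    ((ae_restrict_iff' measurableSet_Ioi).2 (ae_of_all _ hfnonneg)) hint]
  set δ : ℝ := min 1 (1/c) with hδ
  have hδpos : 0 < δ := lt_min one_pos (by positivity)
  have hsub : Ioo (0:ℝ) δ ⊆ Function.support f ∩ Ioi 0 := by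
    intro x hx
    obtain ⟨hx0, hxδ⟩ := hx
    constructor
    · have hcx0 : 0 < c * x := by positivity
      have hcx1 : c * x ≤ 1 := by
        have : x < 1/c := lt_of_lt_of_le hxδ (min_le_right _ _)
        calc c * x ≤ c * (1/c) := by nlinarith
          _ = 1 := by field_simp
      have hpos : 0 < f x := by
        apply mul_pos
        · exact div_pos (hexp x hx0) (Real.rpow_pos_of_pos hx0 _)
        · exact besselCombo_pos (c * x) hcx0 hcx1
      exact Function.mem_support.2 (ne_of_gt hpos)
    · exact hx0
  calc (0:ENNReal) < ENNReal.ofReal δ := by simp [hδpos]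
    _ = volume (Ioo (0:ℝ) δ) := by rw [Real.volume_Ioo, sub_zero]
    _ ≤ volume (Function.support f ∩ Ioi 0) := measure_mono hsub
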